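/- Let M ∈ ℂ^{K×K} be Hermitian positive semidefinite of rank R, and suppose b lies in the column space of M. Then the complex conjugate gradient method started from x_0 = 0 reaches a point x with M x + b = 0 after at most R iterations. -/

import Mathlib

open Matrix
open scoped ComplexOrder

private lemma dp_sum {K : ℕ} {ι : Type*} (s : Finset ι) (u : Fin K → ℂ)
    (w : ι → Fin K → ℂ) : u ⬝ᵥ (∑ j ∈ s, w j) = ∑ j ∈ s, u ⬝ᵥ w j := by
  classical
  induction s using Finset.induction with
  | empty => simp
  | insert _ _ h ih => rw [Finset.sum_insert h, Finset.sum_insert h, dotProduct_add, ih]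

theorem stmt_10 (K R : ℕ) (M : Matrix (Fin K) (Fin K) ℂ) (hM : M.PosSemidef)
    (hrank : M.rank = R)
    (b : Fin K → ℂ) (hb : ∃ v, M.mulVec v = b)
    (x r p : ℕ → (Fin K → ℂ)) (α β : ℕ → ℂ)
    (hx0 : x 0 = 0)
    (hr0 : r 0 = b)
    (hp0 : p 0 = r 0)
    (hα : ∀ k, α k = -(star (p k) ⬝ᵥ r k) / (star (p k) ⬝ᵥ M.mulVec (p k)))
    (hx : ∀ k, x (k + 1) = x k + α k • p k)
    (hr : ∀ k, r (k + 1) = r k + α k • M.mulVec (p k))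
    (hβ : ∀ k, β (k + 1) = -(star (M.mulVec (p k)) ⬝ᵥ r (k + 1)) / (star (p k) ⬝ᵥ M.mulVec (p k)))
    (hp : ∀ k, p (k + 1) = r (k + 1) + β (k + 1) • p k) :
    ∃ m ≤ R, M.mulVec (x m) + b = 0 := by
  obtain ⟨v0, hv0⟩ := hb
  set S : Submodule ℂ (Fin K → ℂ) := LinearMap.range M.mulVecLin with hS
  have hMem : ∀ u, M.mulVec u ∈ S := fun u => ⟨u, rfl⟩
  have hHerm : Mᴴ = M := hM.isHermitian
  have hsym : ∀ u w, star (M *ᵥ u) ⬝ᵥ w = star u ⬝ᵥ (M *ᵥ w) := by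
    intro u w
    rw [star_mulVec, hHerm, ← dotProduct_mulVec]
  have hconj : ∀ u w : Fin K → ℂ, star (star u ⬝ᵥ w) = star w ⬝ᵥ u := by
    intro u w
    rw [star_dotProduct, star_star]
  have hzero : ∀ u, u ∈ S → star u ⬝ᵥ M *ᵥ u = 0 → u = 0 := by
    intro u hu h
    obtain ⟨w, hw⟩ := hu
    rw [mulVecLin_apply] at hw
    have h2 : M *ᵥ u = 0 := (hM.dotProduct_mulVec_zero_iff u).mp h
    have h3 : star (M *ᵥ w) ⬝ᵥ u = star w ⬝ᵥ (M *ᵥ u) := hsym w u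
    rw [hw, h2, dotProduct_zero] at h3
    exact dotProduct_star_self_eq_zero.mp h3
  have hrxb : ∀ k, r k = M *ᵥ x k + b := by
    intro k
    induction k with
    | zero => rw [hr0, hx0, mulVec_zero, zero_add]
    | succ k ih => rw [hr k, hx k, mulVec_add, mulVec_smul, ih]; abel
  have hrS : ∀ k, r k ∈ S := by
    intro k
    induction k with
    | zero => rw [hr0, ← hv0]; exact hMem v0
    | succ k ih => rw [hr k]; exact S.add_mem ih (S.smul_mem _ (hMem _))
  have hpS : ∀ k, p k ∈ S := by
    intro k
    induction k with
    | zero => rw [hp0]; exact hrS 0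
    | succ k ih => rw [hp k]; exact S.add_mem (hrS _) (S.smul_mem _ ih)
  have key : ∀ k, (∀ j, j < k → r j ≠ 0) →
      (∀ i j, i < j → j ≤ k → star (r i) ⬝ᵥ r j = 0) ∧
      (∀ i j, i < j → j ≤ k → star (p i) ⬝ᵥ M *ᵥ p j = 0) ∧
      (∀ i j, i < j → j ≤ k → star (p i) ⬝ᵥ r j = 0) ∧
      (∀ j, j ≤ k → star (p j) ⬝ᵥ r j = star (r j) ⬝ᵥ r j) := by
    intro k
    induction k with
    | zero =>
      intro _
      refine ⟨fun i j hij hj => absurd (hij.trans_le hj) (Nat.not_lt_zero i),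
        fun i j hij hj => absurd (hij.trans_le hj) (Nat.not_lt_zero i),
        fun i j hij hj => absurd (hij.trans_le hj) (Nat.not_lt_zero i),
        fun j hj => ?_⟩
      interval_cases j
      rw [hp0]
    | succ k ih =>
      intro hnz
      obtain ⟨H1, H2, H3, H4⟩ := ih (fun j hj => hnz j (by omega))
      have hrr : ∀ j, j ≤ k → star (r j) ⬝ᵥ r j ≠ 0 := by
        intro j hj h
        exact hnz j (by omega) (dotProduct_star_self_eq_zero.mp h)
      have hpne : ∀ j, j ≤ k → p j ≠ 0 := by
        intro j hj h
        apply hrr j hj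
        rw [← H4 j hj, h, star_zero, zero_dotProduct]
      have hδ : ∀ j, j ≤ k → star (p j) ⬝ᵥ M *ᵥ p j ≠ 0 :=
        fun j hj h => hpne j hj (hzero _ (hpS j) h)
      have hα' : ∀ j, j ≤ k →
          α j = -(star (r j) ⬝ᵥ r j) / (star (p j) ⬝ᵥ M *ᵥ p j) := by
        intro j hj; rw [hα, H4 j hj]
      have hαne : ∀ j, j ≤ k → α j ≠ 0 := by
        intro j hj
        rw [hα' j hj]
        exact div_ne_zero (neg_ne_zero.2 (hrr j hj)) (hδ j hj)
      have N3 : ∀ i, i ≤ k → star (p i) ⬝ᵥ r (k+1) = 0 := by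
        intro i hi
        rw [hr k, dotProduct_add, dotProduct_smul]
        rcases eq_or_lt_of_le hi with rfl | hlt
        · rw [smul_eq_mul, H4 i le_rfl, hα' i le_rfl,
            div_mul_cancel₀ _ (hδ i le_rfl)]
          ring
        · rw [H3 i k hlt le_rfl, H2 i k hlt le_rfl, smul_zero, add_zero]
      have N1 : ∀ i, i ≤ k → star (r i) ⬝ᵥ r (k+1) = 0 := by
        intro i hi
        match i with
        | 0 => rw [← hp0]; exact N3 0 (Nat.zero_le k)
        | (n+1) =>
          have hrp : r (n+1) = p (n+1) - β (n+1) • p n := by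
            rw [hp n]; abel
          rw [hrp, star_sub, sub_dotProduct, star_smul, smul_dotProduct,
            N3 (n+1) hi, N3 n (by omega), smul_zero, sub_zero]
      have N4 : star (p (k+1)) ⬝ᵥ r (k+1) = star (r (k+1)) ⬝ᵥ r (k+1) := by
        rw [hp k, star_add, add_dotProduct, star_smul, smul_dotProduct,
          N3 k le_rfl, smul_zero, add_zero]
      have N2 : ∀ i, i ≤ k → star (p i) ⬝ᵥ M *ᵥ p (k+1) = 0 := by
        intro i hi
        rw [hp k, mulVec_add, mulVec_smul, dotProduct_add, dotProduct_smul]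
        rcases eq_or_lt_of_le hi with rfl | hlt
        · rw [← hsym, hβ i, smul_eq_mul, div_mul_cancel₀ _ (hδ i le_rfl)]
          ring
        · rw [H2 i k hlt le_rfl, smul_zero, add_zero, ← hsym]
          have hcalc : star (α i • (M *ᵥ p i)) ⬝ᵥ r (k+1) = 0 := by
            have heq : α i • (M *ᵥ p i) = r (i+1) - r i := by
              rw [hr i]; abel
            rw [heq, star_sub, sub_dotProduct, N1 (i+1) (by omega),
              N1 i (by omega), sub_zero]
          rw [star_smul, smul_dotProduct, smul_eq_mul] at hcalc
          exact (mul_eq_zero.mp hcalc).resolve_left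
            (star_ne_zero.2 (hαne i hlt.le))
      refine ⟨?_, ?_, ?_, ?_⟩
      · intro i j hij hj
        rcases eq_or_lt_of_le hj with rfl | h
        · exact N1 i (by omega)
        · exact H1 i j hij (by omega)
      · intro i j hij hj
        rcases eq_or_lt_of_le hj with rfl | h
        · exact N2 i (by omega)
        · exact H2 i j hij (by omega)
      · intro i j hij hj
        rcases eq_or_lt_of_le hj with rfl | h
        · exact N3 i (by omega)
        · exact H3 i j hij (by omega)
      · intro j hj
        rcases eq_or_lt_of_le hj with rfl | h
        · exact N4
        · exact H4 j (by omega)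
  by_contra hcon
  push_neg at hcon
  have hrne : ∀ m, m ≤ R → r m ≠ 0 := by
    intro m hm h
    exact hcon m hm (by rw [← hrxb m, h])
  obtain ⟨H1, _, _, _⟩ := key R (fun j hj => hrne j hj.le)
  have horth : ∀ i j : Fin (R+1), i ≠ j → star (r i) ⬝ᵥ r j = 0 := by
    intro i j hij
    rcases Nat.lt_or_ge (i : ℕ) (j : ℕ) with h | h
    · exact H1 i j h j.is_le
    · have hlt : (j : ℕ) < (i : ℕ) := by
        rcases Nat.lt_or_ge (j : ℕ) (i : ℕ) with h' | h'
        · exact h'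
        · exact absurd (Fin.ext (le_antisymm h' h)) hij
      rw [← hconj, H1 j i hlt i.is_le, star_zero]
  have hli : LinearIndependent ℂ (fun i : Fin (R+1) => r i) := by
    rw [linearIndependent_iff']
    intro s g hsum i hi
    have h0 : star (r i) ⬝ᵥ (∑ j ∈ s, g j • r (j : ℕ)) = 0 := by
      rw [hsum, dotProduct_zero]
    rw [dp_sum] at h0
    have h1 : ∑ j ∈ s, star (r i) ⬝ᵥ (g j • r (j : ℕ)) =
        g i * (star (r i) ⬝ᵥ r i) := by
      rw [Finset.sum_eq_single i]
      · rw [dotProduct_smul, smul_eq_mul]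
      · intro j hjs hji
        rw [dotProduct_smul, horth i j (Ne.symm hji), smul_zero]
      · intro habs; exact absurd hi habs
    rw [h1] at h0
    rcases mul_eq_zero.mp h0 with h | h
    · exact h
    · exact absurd (dotProduct_star_self_eq_zero.mp h) (hrne i i.is_le)
  have hli2 : LinearIndependent ℂ (fun i : Fin (R+1) => (⟨r i, hrS i⟩ : S)) :=
    LinearIndependent.of_comp S.subtype hli
  have hcard := hli2.fintype_card_le_finrank
  rw [Fintype.card_fin] at hcard
  have hfr : Module.finrank ℂ S = R := hrank
  omega
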